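/- Let M = (S²×S²) \ {(u,v) : u₃ = 0 and v₃ ≥ 0} and let h : [−1,1] → ℝ be continuous, nonincreasing, with h ≥ 0 and h(z) = 0 if and only if z ≥ 0. Let F̃(u,v) = (u₃, (v₃+2)/(u₃²+h(v₃))). Then the image of F̃ equals the region {(x,y) ∈ ℝ² : 0 < |x| ≤ 1 and 1/(x²+h(−1)) ≤ y ≤ 3/x²} ∪ ({0} × [1/h(−1), ∞)). -/

import Mathlib

open Set

noncomputable section

/-- The unit sphere in `ℝ³`. -/
def S2 : Set (EuclideanSpace ℝ (Fin 3)) := {u | ‖u‖ = 1}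

/-- `M = (S²×S²) \ {(u,v) : u₃ = 0 and v₃ ≥ 0}`. -/
def Msp : Set (EuclideanSpace ℝ (Fin 3) × EuclideanSpace ℝ (Fin 3)) :=
  (S2 ×ˢ S2) \ {p | p.1 2 = 0 ∧ 0 ≤ p.2 2}

/-- An explicit point on the sphere with prescribed third coordinate. -/
noncomputable def pt (x : ℝ) : EuclideanSpace ℝ (Fin 3) :=
  (WithLp.equiv 2 (Fin 3 → ℝ)).symm ![Real.sqrt (1 - x^2), 0, x]

lemma pt_two (x : ℝ) : pt x 2 = x := rfl

lemma pt_mem {x : ℝ} (hx : x ∈ Icc (-1 : ℝ) 1) : pt x ∈ S2 := by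
  have h1 : 0 ≤ 1 - x ^ 2 := by nlinarith [hx.1, hx.2]
  have hsum : ∑ i : Fin 3, ‖pt x i‖ ^ 2 = 1 := by
    have h0 : pt x 0 = Real.sqrt (1 - x^2) := rfl
    have h1' : pt x 1 = 0 := rfl
    have h2 : pt x 2 = x := rfl
    rw [Fin.sum_univ_three, h0, h1', h2]
    simp only [Real.norm_eq_abs, sq_abs]
    rw [Real.sq_sqrt h1]
    ring
  simp only [S2, mem_setOf_eq, EuclideanSpace.norm_eq, hsum, Real.sqrt_one]

lemma coord_mem {u : EuclideanSpace ℝ (Fin 3)} (hu : u ∈ S2) (i : Fin 3) :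
    u i ∈ Icc (-1 : ℝ) 1 := by
  have hb : |u i| ≤ 1 := by
    have h1 : |u i| ^ 2 ≤ ∑ j : Fin 3, ‖u j‖ ^ 2 := by
      have := Finset.single_le_sum (f := fun j : Fin 3 => ‖u j‖ ^ 2)
        (fun j _ => by positivity) (Finset.mem_univ i)
      simpa [Real.norm_eq_abs] using this
    have h2 : Real.sqrt (|u i| ^ 2) ≤ Real.sqrt (∑ j : Fin 3, ‖u j‖ ^ 2) :=
      Real.sqrt_le_sqrt h1
    rw [Real.sqrt_sq (abs_nonneg _), ← EuclideanSpace.norm_eq] at h2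
    have hn : ‖u‖ = 1 := hu
    rwa [hn] at h2
  exact abs_le.mp hb

/-- Let `h : [−1,1] → ℝ` be continuous, nonincreasing, with `h ≥ 0` and
`h(z) = 0 ↔ z ≥ 0`, and let `F̃(u,v) = (u₃, (v₃+2)/(u₃²+h(v₃)))` on `M`. Then the image
of `F̃` equals
`{(x,y) : 0 < |x| ≤ 1, 1/(x²+h(−1)) ≤ y ≤ 3/x²} ∪ ({0} × [1/h(−1),∞))`. -/
theorem image_of_Ftilde (h : ℝ → ℝ)
    (hcont : ContinuousOn h (Icc (-1 : ℝ) 1))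
    (hanti : AntitoneOn h (Icc (-1 : ℝ) 1))
    (hnn : ∀ z ∈ Icc (-1 : ℝ) 1, 0 ≤ h z)
    (hzero : ∀ z ∈ Icc (-1 : ℝ) 1, (h z = 0 ↔ 0 ≤ z)) :
    Set.range (Msp.restrict fun p => (p.1 2, (p.2 2 + 2) / ((p.1 2) ^ 2 + h (p.2 2)))) =
      {p : ℝ × ℝ | 0 < |p.1| ∧ |p.1| ≤ 1 ∧
          1 / (p.1 ^ 2 + h (-1)) ≤ p.2 ∧ p.2 ≤ 3 / p.1 ^ 2} ∪
        ({0} ×ˢ Ici (1 / h (-1))) := by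
  have hm1 : (-1 : ℝ) ∈ Icc (-1 : ℝ) 1 := by constructor <;> norm_num
  have h1m : (1 : ℝ) ∈ Icc (-1 : ℝ) 1 := by constructor <;> norm_num
  have h0m : (0 : ℝ) ∈ Icc (-1 : ℝ) 1 := by constructor <;> norm_num
  have hneg1pos : 0 < h (-1) := by
    rcases (hnn _ hm1).lt_or_eq with hlt | heq
    · exact hlt
    · exact absurd ((hzero _ hm1).mp heq.symm) (by norm_num)
  have hone : h 1 = 0 := (hzero _ h1m).mpr (by norm_num)
  have hz0 : h 0 = 0 := (hzero _ h0m).mpr le_rfl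
  show range (Msp.domRestrict (fun p : EuclideanSpace ℝ (Fin 3) × EuclideanSpace ℝ (Fin 3) =>
    (p.1 2, (p.2 2 + 2) / ((p.1 2) ^ 2 + h (p.2 2))))) = _
  rw [Set.range_domRestrict]
  ext ⟨x, y⟩
  simp only [mem_image, mem_union, mem_setOf_eq, mem_prod, mem_singleton_iff, mem_Ici,
    Prod.exists]
  constructor
  · rintro ⟨u, v, hM, heq⟩
    obtain ⟨⟨huS, hvS⟩, hnot⟩ := hM
    have hxIcc := coord_mem huS 2
    have htIcc := coord_mem hvS 2
    obtain ⟨hx, hy⟩ := Prod.mk.injEq _ _ _ _ ▸ heq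
    set t := v 2 with htdef
    have hht : 0 ≤ h t := hnn _ htIcc
    have hhm : h t ≤ h (-1) := hanti hm1 htIcc htIcc.1
    by_cases hx0 : x = 0
    · right
      have ht0 : t < 0 := by
        by_contra hge
        exact hnot ⟨hx0 ▸ hx, le_of_not_gt hge⟩
      have hhtpos : 0 < h t := by
        rcases hht.lt_or_eq with hlt | heq'
        · exact hlt
        · exact absurd ((hzero _ htIcc).mp heq'.symm) (not_le.mpr ht0)
      refine ⟨hx0, ?_⟩
      rw [← hy, hx, hx0]
      have hd : (0 : ℝ) ^ 2 + h t = h t := by ring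
      rw [hd]
      calc 1 / h (-1) ≤ 1 / h t := one_div_le_one_div_of_le hhtpos hhm
        _ ≤ (t + 2) / h t := by
            rw [div_le_div_iff₀ hhtpos hhtpos]
            nlinarith [htIcc.1]
    · left
      have hxne : (u 2) ≠ 0 := fun hc => hx0 (hx ▸ hc)
      have hxpos : 0 < x ^ 2 := by positivity
      have hDpos : 0 < x ^ 2 + h t := by linarith
      have hApos : 0 < x ^ 2 + h (-1) := by linarith
      refine ⟨abs_pos.mpr hx0, abs_le.mpr (hx ▸ hxIcc), ?_, ?_⟩
      · rw [← hy, hx, div_le_div_iff₀ hApos hDpos]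
        nlinarith [htIcc.1]
      · rw [← hy, hx, div_le_div_iff₀ hDpos hxpos]
        nlinarith [htIcc.2]
  · rintro (⟨hx0, hx1, hyl, hyu⟩ | ⟨hx0, hy⟩)
    · -- x ≠ 0 branch
      have hxne : x ≠ 0 := fun hc => by simp [hc] at hx0
      have hxIcc : x ∈ Icc (-1 : ℝ) 1 := abs_le.mp hx1
      have hxpos : 0 < x ^ 2 := by positivity
      have hApos : 0 < x ^ 2 + h (-1) := by linarith
      set g : ℝ → ℝ := fun t => y * (x ^ 2 + h t) - (t + 2) with hg
      have hgcont : ContinuousOn g (Icc (-1 : ℝ) 1) := by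
        apply ContinuousOn.sub
        · exact continuousOn_const.mul (continuousOn_const.add hcont)
        · exact (continuous_id.add continuous_const).continuousOn
      have hga : 0 ≤ g (-1) := by
        have := (div_le_iff₀ hApos).mp hyl
        simp only [hg]
        linarith
      have hgb : g 1 ≤ 0 := by
        have := (le_div_iff₀ hxpos).mp hyu
        simp only [hg, hone]
        linarith
      have h0mem : (0 : ℝ) ∈ Icc (g 1) (g (-1)) := ⟨hgb, hga⟩
      obtain ⟨t, htIcc, hgt⟩ := intermediate_value_Icc' (by norm_num : (-1:ℝ) ≤ 1) hgcont h0mem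
      have hht : 0 ≤ h t := hnn _ htIcc
      have hDpos : 0 < x ^ 2 + h t := by linarith
      have hyeq : (t + 2) / (x ^ 2 + h t) = y := by
        rw [div_eq_iff (ne_of_gt hDpos)]
        simp only [hg] at hgt
        linarith
      refine ⟨pt x, pt t, ⟨⟨pt_mem hxIcc, pt_mem htIcc⟩, ?_⟩, ?_⟩
      · rintro ⟨hc, -⟩
        exact hxne (by simpa [pt_two] using hc)
      · simp only [pt_two, hyeq]
    · -- x = 0 branch
      set g : ℝ → ℝ := fun t => y * h t - (t + 2) with hg
      have hsub : Icc (-1 : ℝ) 0 ⊆ Icc (-1 : ℝ) 1 := Icc_subset_Icc le_rfl (by norm_num)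
      have hgcont : ContinuousOn g (Icc (-1 : ℝ) 0) := by
        apply ContinuousOn.sub
        · exact continuousOn_const.mul (hcont.mono hsub)
        · exact (continuous_id.add continuous_const).continuousOn
      have hga : 0 ≤ g (-1) := by
        have := (div_le_iff₀ hneg1pos).mp hy
        simp only [hg]
        linarith
      have hgb : g 0 ≤ 0 := by simp [hg, hz0]
      have h0mem : (0 : ℝ) ∈ Icc (g 0) (g (-1)) := ⟨hgb, hga⟩
      obtain ⟨t, htIcc0, hgt⟩ := intermediate_value_Icc' (by norm_num : (-1:ℝ) ≤ 0) hgcont h0mem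
      have htIcc : t ∈ Icc (-1 : ℝ) 1 := hsub htIcc0
      have htne : t ≠ 0 := by
        intro hc
        rw [hc] at hgt
        simp [hg, hz0] at hgt
      have ht0 : t < 0 := lt_of_le_of_ne htIcc0.2 htne
      have hhtpos : 0 < h t := by
        rcases (hnn _ htIcc).lt_or_eq with hlt | heq'
        · exact hlt
        · exact absurd ((hzero _ htIcc).mp heq'.symm) (not_le.mpr ht0)
      have hyeq : (t + 2) / ((0 : ℝ) ^ 2 + h t) = y := by
        rw [div_eq_iff (by positivity)]
        simp only [hg] at hgt
        nlinarith
      refine ⟨pt 0, pt t, ⟨⟨pt_mem h0m, pt_mem htIcc⟩, ?_⟩, ?_⟩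
      · rintro ⟨-, hc⟩
        exact absurd (show (0:ℝ) ≤ t from hc) (not_le.mpr ht0)
      · simp only [pt_two, hyeq, hx0]
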